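/- Let V, V^u, 𝐰 be smooth real-valued functions on an open set O ⊂ ℝ² (with variables (x,t)), with V_t(x,t) ≠ 0 on O. Define 𝐰_{;t} := 𝐰_t − (V_{tt}/V_t)𝐰, 𝐰_{;x} := 𝐰_x − (V_{xt}/V_t)𝐰 and I := 1 − 𝐰_{;t}/V_t, and suppose I(x,t) ≠ 0 on O. If V(x,t) = V^u(x, t − 𝐰(x,t)/V_t(x,t)) for all (x,t) ∈ O (with (x, t − 𝐰/V_t) staying in the domain of V^u), then for all (x,t) ∈ O: V^u_t(x, t − 𝐰/V_t(x,t)) = V_t(x,t)/I(x,t) and V^u_x(x, t − 𝐰/V_t(x,t)) = V_x(x,t) + 𝐰_{;x}(x,t)/I(x,t). -/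

import Mathlib

open Real

noncomputable section

/-- Partial derivative in the first variable of a function on ℝ². -/
def pdx (f : ℝ × ℝ → ℝ) (p : ℝ × ℝ) : ℝ := fderiv ℝ f p (1, 0)

/-- Partial derivative in the second variable of a function on ℝ². -/
def pdt (f : ℝ × ℝ → ℝ) (p : ℝ × ℝ) : ℝ := fderiv ℝ f p (0, 1)

/-- 𝐰_{;t} := 𝐰_t − (V_{tt}/V_t)𝐰. -/
def wSemiT (V w : ℝ × ℝ → ℝ) (p : ℝ × ℝ) : ℝ :=
  pdt w p - pdt (pdt V) p / pdt V p * w p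

/-- 𝐰_{;x} := 𝐰_x − (V_{xt}/V_t)𝐰. -/
def wSemiX (V w : ℝ × ℝ → ℝ) (p : ℝ × ℝ) : ℝ :=
  pdx w p - pdx (pdt V) p / pdt V p * w p

/-- I := 1 − 𝐰_{;t}/V_t. -/
def Ifun (V w : ℝ × ℝ → ℝ) (p : ℝ × ℝ) : ℝ := 1 - wSemiT V w p / pdt V p

lemma clm_eval (L : ℝ × ℝ →L[ℝ] ℝ) (a b : ℝ) :
    L (a, b) = a * L (1, 0) + b * L (0, 1) := by
  have h : (a, b) = a • ((1:ℝ), (0:ℝ)) + b • ((0:ℝ), (1:ℝ)) := by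
    simp [Prod.ext_iff]
  rw [h, map_add, map_smul, map_smul, smul_eq_mul, smul_eq_mul]

/-- if V(x,t) = V^u(x, t − 𝐰/V_t) then
V^u_t(x, t − 𝐰/V_t) = V_t/I and V^u_x(x, t − 𝐰/V_t) = V_x + 𝐰_{;x}/I. -/
theorem statement12 (O O' : Set (ℝ × ℝ)) (hO : IsOpen O) (hO' : IsOpen O')
    (V Vu w : ℝ × ℝ → ℝ)
    (hV : ContDiffOn ℝ (⊤ : ℕ∞) V O) (hw : ContDiffOn ℝ (⊤ : ℕ∞) w O)
    (hVu : ContDiffOn ℝ (⊤ : ℕ∞) Vu O')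
    (hVt : ∀ p ∈ O, pdt V p ≠ 0)
    (hI : ∀ p ∈ O, Ifun V w p ≠ 0)
    (hmem : ∀ p ∈ O, (p.1, p.2 - w p / pdt V p) ∈ O')
    (hrel : ∀ p ∈ O, V p = Vu (p.1, p.2 - w p / pdt V p)) :
    ∀ p ∈ O,
      pdt Vu (p.1, p.2 - w p / pdt V p) = pdt V p / Ifun V w p ∧
      pdx Vu (p.1, p.2 - w p / pdt V p) = pdx V p + wSemiX V w p / Ifun V w p := by
  intro p hp
  have hVtp := hVt p hp
  have hIp := hI p hp
  have hVp : ContDiffAt ℝ (⊤ : ℕ∞) V p := hV.contDiffAt (hO.mem_nhds hp)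
  have hwp : DifferentiableAt ℝ w p :=
    (hw.contDiffAt (hO.mem_nhds hp)).differentiableAt (by simp)
  have hVup : DifferentiableAt ℝ Vu (p.1, p.2 - w p / pdt V p) :=
    (hVu.contDiffAt (hO'.mem_nhds (hmem p hp))).differentiableAt
      (by simp)
  have hdV : ContDiffAt ℝ 1 (fderiv ℝ V) p := hVp.fderiv_right (by
    have h : ((1+1:ℕ∞) : WithTop ℕ∞) ≤ ((⊤:ℕ∞) : WithTop ℕ∞) := WithTop.coe_le_coe.mpr le_top
    simpa using h)
  have hpdtV : DifferentiableAt ℝ (pdt V) p :=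
    ((hdV.clm_apply contDiffAt_const).differentiableAt one_ne_zero :
      DifferentiableAt ℝ (fun q => fderiv ℝ V q ((0:ℝ), (1:ℝ))) p)
  have hinv : HasFDerivAt (fun q => (pdt V q)⁻¹)
      ((-(pdt V p ^ 2)⁻¹) • fderiv ℝ (pdt V) p) p :=
    (hasDerivAt_inv hVtp).comp_hasFDerivAt p hpdtV.hasFDerivAt
  have hgd := hwp.hasFDerivAt.mul hinv
  have hφd := HasFDerivAt.prodMk (hasFDerivAt_fst (p := p)) (HasFDerivAt.sub hasFDerivAt_snd hgd)
  have hcomp := hVup.hasFDerivAt.comp p hφd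
  have heq : V =ᶠ[nhds p] fun q => Vu (q.1, q.2 - w q * (pdt V q)⁻¹) := by
    filter_upwards [hO.mem_nhds hp] with q hq
    simpa [div_eq_mul_inv] using hrel q hq
  have hVd : HasFDerivAt V _ p := hcomp.congr_of_eventuallyEq heq
  have hD := hVd.fderiv
  have hDt := congrArg (fun (M : ℝ × ℝ →L[ℝ] ℝ) => M (0, 1)) hD
  have hDx := congrArg (fun (M : ℝ × ℝ →L[ℝ] ℝ) => M (1, 0)) hD
  simp only [ContinuousLinearMap.comp_apply, ContinuousLinearMap.prod_apply,
    ContinuousLinearMap.coe_fst', ContinuousLinearMap.coe_snd',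
    ContinuousLinearMap.sub_apply, ContinuousLinearMap.add_apply,
    ContinuousLinearMap.smul_apply, smul_eq_mul] at hDt hDx
  have e1 : fderiv ℝ (pdt V) p (0, 1) = pdt (pdt V) p := rfl
  have e2 : fderiv ℝ (pdt V) p (1, 0) = pdx (pdt V) p := rfl
  have e3 : fderiv ℝ w p (0, 1) = pdt w p := rfl
  have e4 : fderiv ℝ w p (1, 0) = pdx w p := rfl
  have e5 : fderiv ℝ V p (0, 1) = pdt V p := rfl
  have e6 : fderiv ℝ V p (1, 0) = pdx V p := rfl
  rw [e5] at hDt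
  rw [e6] at hDx
  rw [clm_eval] at hDt hDx
  rw [e1, e3] at hDt
  rw [e2, e4] at hDx
  have eA : fderiv ℝ Vu (p.1, p.2 - w p / pdt V p) (0, 1)
      = pdt Vu (p.1, p.2 - w p / pdt V p) := rfl
  have eB : fderiv ℝ Vu (p.1, p.2 - w p / pdt V p) (1, 0)
      = pdx Vu (p.1, p.2 - w p / pdt V p) := rfl
  rw [eA, eB] at hDt hDx
  set vt := pdt V p
  set vx := pdx V p
  set vtt := pdt (pdt V) p
  set vxt := pdx (pdt V) p
  set wt := pdt w p
  set wx := pdx w p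
  set W := w p
  set A := pdt Vu (p.1, p.2 - W / vt)
  set B := pdx Vu (p.1, p.2 - W / vt)
  have hIp' : 1 - (wt - vtt / vt * W) / vt ≠ 0 := hIp
  clear hD hVd hcomp hφd hgd hinv heq hdV hpdtV hwp hVup hVp hrel hmem hI hVt hV hw hVu
  have hc : (1 - (wt - vtt / vt * W) / vt) = (1 - (W * (-(vt ^ 2)⁻¹ * vtt) + vt⁻¹ * wt)) := by
    field_simp
    ring
  have hDt' : vt = (1 - (wt - vtt / vt * W) / vt) * A := by
    rw [hc]
    linarith [hDt]
  have hA' : A = vt / (1 - (wt - vtt / vt * W) / vt) := by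
    rw [eq_div_iff hIp']
    linarith [hDt']
  constructor
  · show A = vt / Ifun V w p
    unfold Ifun wSemiT
    exact hA'
  · show B = vx + wSemiX V w p / Ifun V w p
    unfold Ifun wSemiT wSemiX
    have hB' : B = vx + (W * (-(vt ^ 2)⁻¹ * vxt) + vt⁻¹ * wx) * A := by
      linarith [hDx]
    rw [hB', hA']
    show vx + (W * (-(vt ^ 2)⁻¹ * vxt) + vt⁻¹ * wx) * (vt / (1 - (wt - vtt / vt * W) / vt)) =
      vx + (wx - vxt / vt * W) / (1 - (wt - vtt / vt * W) / vt)
    have hkey : (W * (-(vt ^ 2)⁻¹ * vxt) + vt⁻¹ * wx) * vt = wx - vxt / vt * W := by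
      field_simp
      ring
    rw [← mul_div_assoc, hkey]
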